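/- Let W : ℝ → ℝ be twice continuously differentiable with |W''(s)| ≤ L for all s ∈ ℝ. Then for all a, b, c ∈ ℝ: W(a) − W(b) ≤ (2W'(b) − W'(c))·(a − b) + (L/2)·((b−c)² + 2(a−b)²). -/

import Mathlib

/-- Lipschitz bound on `deriv W` from the bound on `W''`. -/
theorem deriv_lip_aux (W : ℝ → ℝ) (L : ℝ)
    (hW : ContDiff ℝ 2 W) (hL : ∀ s : ℝ, |deriv (deriv W) s| ≤ L)
    (x y : ℝ) : |deriv W x - deriv W y| ≤ L * |x - y| := by
  have hW2 : ContDiff ℝ (1 + 1) W := by exact_mod_cast hW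
  have hd : Differentiable ℝ (deriv W) :=
    ((contDiff_succ_iff_deriv.mp hW2).2.2).differentiable one_ne_zero
  have := (convex_univ : Convex ℝ (Set.univ : Set ℝ)).norm_image_sub_le_of_norm_deriv_le
    (f := deriv W) (fun z _ => hd z)
    (fun z _ => by simpa [Real.norm_eq_abs] using hL z) (Set.mem_univ y) (Set.mem_univ x)
  simpa [Real.norm_eq_abs] using this

/-- One-sided Taylor estimate. -/
theorem taylor_aux (W : ℝ → ℝ) (L : ℝ)
    (hW : ContDiff ℝ 2 W) (hL : ∀ s : ℝ, |deriv (deriv W) s| ≤ L)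
    (a b : ℝ) : W a - W b ≤ deriv W b * (a - b) + L / 2 * (a - b) ^ 2 := by
  have hW1 : Differentiable ℝ W := hW.differentiable (by norm_num)
  set F : ℝ → ℝ := fun x => W x - deriv W b * x - L / 2 * (x - b) ^ 2 with hF
  have hFd : Differentiable ℝ F := by
    apply Differentiable.sub
    · exact hW1.sub (differentiable_id.const_mul _)
    · apply Differentiable.const_mul
      exact (differentiable_id.sub_const b).pow 2
  have hFderiv : ∀ x, deriv F x = deriv W x - deriv W b - L * (x - b) := by
    intro x
    have h1 : HasDerivAt F (deriv W x - deriv W b - L * (x - b)) x := by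
      have h0 := ((hW1 x).hasDerivAt.sub ((hasDerivAt_id x).const_mul (deriv W b))).sub
        ((((hasDerivAt_id x).sub_const b).pow 2).const_mul (L / 2))
      refine h0.congr_deriv ?_
      simp only [id_eq]
      push_cast
      ring
    exact h1.deriv
  have key : F a ≤ F b := by
    rcases le_total b a with hba | hab
    · have : AntitoneOn F (Set.Icc b a) := by
        apply antitoneOn_of_deriv_nonpos (convex_Icc b a) hFd.continuous.continuousOn
          (fun x _ => (hFd x).differentiableWithinAt)
        intro x hx
        rw [interior_Icc] at hx
        rw [hFderiv]
        have h1 := deriv_lip_aux W L hW hL x b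
        have h2 : |x - b| = x - b := abs_of_nonneg (by linarith [hx.1])
        rw [h2] at h1
        have := le_abs_self (deriv W x - deriv W b)
        linarith
      exact this (Set.left_mem_Icc.mpr hba) (Set.right_mem_Icc.mpr hba) hba
    · have : MonotoneOn F (Set.Icc a b) := by
        apply monotoneOn_of_deriv_nonneg (convex_Icc a b) hFd.continuous.continuousOn
          (fun x _ => (hFd x).differentiableWithinAt)
        intro x hx
        rw [interior_Icc] at hx
        rw [hFderiv]
        have h1 := deriv_lip_aux W L hW hL x b
        have h2 : |x - b| = b - x := by
          rw [abs_sub_comm]; exact abs_of_nonneg (by linarith [hx.2])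
        rw [h2] at h1
        have := neg_abs_le (deriv W x - deriv W b)
        linarith
      exact this (Set.left_mem_Icc.mpr hab) (Set.right_mem_Icc.mpr hab) hab
  simp only [hF] at key
  nlinarith [key]

/-- For `W : ℝ → ℝ` twice continuously differentiable with `|W''| ≤ L` everywhere,
`W(a) - W(b) ≤ (2W'(b) - W'(c))(a - b) + (L/2)((b-c)² + 2(a-b)²)` for all `a b c`. -/
theorem double_well_extrapolation_estimate
    (W : ℝ → ℝ) (L : ℝ)
    (hW : ContDiff ℝ 2 W)
    (hL : ∀ s : ℝ, |deriv (deriv W) s| ≤ L)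
    (a b c : ℝ) :
    W a - W b ≤ (2 * deriv W b - deriv W c) * (a - b) +
      (L / 2) * ((b - c) ^ 2 + 2 * (a - b) ^ 2) := by
  have ht := taylor_aux W L hW hL a b
  have hlip := deriv_lip_aux W L hW hL b c
  have h5 : (0:ℝ) ≤ L := (abs_nonneg _).trans (hL 0)
  nlinarith [sq_nonneg (|b - c| - |a - b|), sq_nonneg (|b - c| + |a - b|),
    abs_nonneg (a - b), abs_nonneg (b - c), sq_abs (a - b), sq_abs (b - c),
    mul_le_mul_of_nonneg_right hlip (abs_nonneg (a - b)),
    abs_mul (deriv W b - deriv W c) (a - b),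
    le_abs_self ((deriv W b - deriv W c) * (a - b)),
    neg_abs_le ((deriv W b - deriv W c) * (a - b))]
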